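/- Let X be a set and c : Ultrafilter X → X a map, and let C be the graph relation of c, i.e. C 𝔵 y ↔ c 𝔵 = y. Then C is a U-space (i.e. reflexive and transitive) if and only if c satisfies the Eilenberg–Moore algebra laws for the ultrafilter monad: c (pure x) = x for all x ∈ X, and c (Ultrafilter.map c 𝔛) = c (Ultrafilter.bind 𝔛 id) for all 𝔛 : Ultrafilter (Ultrafilter X). Moreover, if d : Ultrafilter Y → Y also satisfies these laws, then a map f : X → Y is monotone from the graph of c to the graph of d if and only if d ∘ Ultrafilter.map f = f ∘ c. -/
import Mathlib


universe u

/-- The extension `Ĉ` of a U-graph `C` to ultrafilters of ultrafilters. -/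
def UGraph.hat {X : Type u} (C : Ultrafilter X → X → Prop) :
    Ultrafilter (Ultrafilter X) → Ultrafilter X → Prop := fun 𝔛 𝔶 =>
  ∃ 𝔴 : Ultrafilter {p : Ultrafilter X × X // C p.1 p.2},
    Ultrafilter.map (fun p => p.val.1) 𝔴 = 𝔛 ∧ Ultrafilter.map (fun p => p.val.2) 𝔴 = 𝔶

/-- Reflexivity of a U-graph. -/
def UGraph.Refl {X : Type u} (C : Ultrafilter X → X → Prop) : Prop :=
  ∀ x : X, C (pure x) x

/-- Transitivity of a U-graph. -/
def UGraph.Trans {X : Type u} (C : Ultrafilter X → X → Prop) : Prop :=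
  ∀ (𝔛 : Ultrafilter (Ultrafilter X)) (𝔶 : Ultrafilter X) (z : X),
    UGraph.hat C 𝔛 𝔶 → C 𝔶 z → C (Ultrafilter.bind 𝔛 id) z

/-- Monotone maps of U-graphs. -/
def UGraph.Mono {X Y : Type u} (CX : Ultrafilter X → X → Prop)
    (CY : Ultrafilter Y → Y → Prop) (f : X → Y) : Prop :=
  ∀ (𝔵 : Ultrafilter X) (y : X), CX 𝔵 y → CY (Ultrafilter.map f 𝔵) (f y)

theorem stmt0 {X : Type u} (c : Ultrafilter X → X) (C : Ultrafilter X → X → Prop)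
    (hC : ∀ (𝔵 : Ultrafilter X) (y : X), C 𝔵 y ↔ c 𝔵 = y) :
    ((UGraph.Refl C ∧ UGraph.Trans C) ↔
      ((∀ x : X, c (pure x) = x) ∧
        ∀ 𝔛 : Ultrafilter (Ultrafilter X),
          c (Ultrafilter.map c 𝔛) = c (Ultrafilter.bind 𝔛 id))) ∧
    (∀ {Y : Type u} (d : Ultrafilter Y → Y),
      (∀ y : Y, d (pure y) = y) →
      (∀ 𝔜 : Ultrafilter (Ultrafilter Y),
        d (Ultrafilter.map d 𝔜) = d (Ultrafilter.bind 𝔜 id)) →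
      ∀ f : X → Y,
        (UGraph.Mono C (fun 𝔶 z => d 𝔶 = z) f ↔ d ∘ Ultrafilter.map f = f ∘ c)) := by
  constructor
  · constructor
    · rintro ⟨hr, ht⟩
      refine ⟨fun x => (hC _ _).mp (hr x), fun 𝔛 => ?_⟩
      have h1 : UGraph.hat C 𝔛 (Ultrafilter.map c 𝔛) := by
        refine ⟨Ultrafilter.map (fun 𝔵 => ⟨(𝔵, c 𝔵), (hC _ _).mpr rfl⟩) 𝔛, ?_, ?_⟩
        · rw [Ultrafilter.map_map]; rfl
        · rw [Ultrafilter.map_map]; rfl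
      have h2 := ht 𝔛 (Ultrafilter.map c 𝔛) (c (Ultrafilter.map c 𝔛)) h1 ((hC _ _).mpr rfl)
      exact ((hC _ _).mp h2).symm
    · rintro ⟨h1, h2⟩
      refine ⟨fun x => (hC _ _).mpr (h1 x), ?_⟩
      rintro 𝔛 𝔶 z ⟨𝔴, rfl, rfl⟩ hz
      have key : Ultrafilter.map (fun p => p.val.2) 𝔴
          = Ultrafilter.map c (Ultrafilter.map (fun p => p.val.1) 𝔴) := by
        rw [Ultrafilter.map_map]
        congr 1
        funext p
        exact ((hC _ _).mp p.2).symm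
      rw [hC] at hz ⊢
      rw [key] at hz
      rw [h2] at hz
      exact hz
  · intro Y d hd1 hd2 f
    constructor
    · intro h
      funext 𝔵
      exact h 𝔵 (c 𝔵) ((hC _ _).mpr rfl)
    · intro h 𝔵 y hy
      have h' := congrFun h 𝔵
      simp only [Function.comp_apply] at h'
      rw [h', (hC _ _).mp hy]
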